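/- Let m > 2 and let η be a real random variable with E η = 0 and P(|η| > x) ≤ exp(−x^m) for all x ≥ 0. Then there exists a constant C = C(m) < ∞ such that for independent copies (η_i) of η, for every n ≥ 1 and every p ≥ 2: (E| n^{−1/2} ∑_{i=1}^n η_i |^p)^{1/p} ≤ C √p. Equivalently, the normalized sums are uniformly subgaussian: the CLT space of G_m coincides with the subgaussian space G₂. -/

import Mathlib

open MeasureTheory ProbabilityTheory ENNReal Finset

open Real Set


/-- `e·w ≤ exp w`. -/
lemma ew_le_exp (w : ℝ) : Real.exp 1 * w ≤ Real.exp w := by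
  rcases le_or_gt w 0 with h | h
  · have := Real.exp_pos w
    nlinarith [Real.exp_pos (1:ℝ), Real.exp_pos w, mul_nonpos_of_nonneg_of_nonpos (Real.exp_pos (1:ℝ)).le h]
  · have h1 : w ≤ Real.exp (w - 1) := by
      have := Real.add_one_le_exp (w - 1); linarith
    calc Real.exp 1 * w ≤ Real.exp 1 * Real.exp (w - 1) := by
          exact mul_le_mul_of_nonneg_left h1 (Real.exp_pos 1).le
      _ = Real.exp w := by rw [← Real.exp_add]; ring_nf

/-- Lemma A: `|x|^p ≤ (p/(λe))^p (e^{λx} + e^{-λx})`. -/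
lemma abs_rpow_le_mgf_bound (x l p : ℝ) (hl : 0 < l) (hp : 0 < p) :
    |x| ^ p ≤ (p / (l * Real.exp 1)) ^ p * (Real.exp (l * x) + Real.exp (-(l * x))) := by
  have he := Real.exp_pos 1
  have h1 : (l * |x|) ^ p ≤ (p / Real.exp 1) ^ p * Real.exp (l * |x|) := by
    have hw : 0 ≤ l * |x| := mul_nonneg hl.le (abs_nonneg x)
    set w := l * |x| / p with hwdef
    have hw0 : 0 ≤ w := div_nonneg hw hp.le
    have hlx : l * |x| = p * w := by
      rw [hwdef, mul_div_assoc']; exact (mul_div_cancel_left₀ (l * |x|) hp.ne').symm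
    have key : p * w ≤ p / Real.exp 1 * Real.exp w := by
      have := ew_le_exp w
      rw [div_mul_eq_mul_div, le_div_iff₀ he]
      nlinarith [hp.le]
    calc (l * |x|) ^ p = (p * w) ^ p := by rw [hlx]
      _ ≤ (p / Real.exp 1 * Real.exp w) ^ p :=
          Real.rpow_le_rpow (by positivity) key hp.le
      _ = (p / Real.exp 1) ^ p * (Real.exp w) ^ p :=
          Real.mul_rpow (by positivity) (Real.exp_pos w).le
      _ = (p / Real.exp 1) ^ p * Real.exp (w * p) := by rw [← Real.exp_mul]
      _ = (p / Real.exp 1) ^ p * Real.exp (l * |x|) := by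
          rw [hwdef]; field_simp
  have h2 : Real.exp (l * |x|) ≤ Real.exp (l * x) + Real.exp (-(l * x)) := by
    rcases abs_cases x with ⟨hx, _⟩ | ⟨hx, _⟩
    · rw [hx]; nlinarith [Real.exp_pos (-(l * x))]
    · rw [hx, mul_neg, ← neg_mul]
      nlinarith [Real.exp_pos (l * x)]
  have h3 : (l * |x|) ^ p = l ^ p * |x| ^ p := Real.mul_rpow hl.le (abs_nonneg x)
  have h4 : (p / (l * Real.exp 1)) ^ p * l ^ p = (p / Real.exp 1) ^ p := by
    rw [← Real.mul_rpow (by positivity) hl.le]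
    congr 1; field_simp
  have hlp : (0:ℝ) < l ^ p := Real.rpow_pos_of_pos hl p
  rw [← mul_le_mul_iff_right₀ hlp, ← h3]
  calc (l * |x|) ^ p ≤ (p / Real.exp 1) ^ p * Real.exp (l * |x|) := h1
    _ ≤ (p / Real.exp 1) ^ p * (Real.exp (l * x) + Real.exp (-(l * x))) := by
        exact mul_le_mul_of_nonneg_left h2 (by positivity)
    _ = l ^ p * ((p / (l * Real.exp 1)) ^ p * (Real.exp (l * x) + Real.exp (-(l * x)))) := by
        rw [← h4]; ring

/-- `exp x ≤ x + exp (x^2)`. -/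
lemma exp_le_add_exp_sq (x : ℝ) : Real.exp x ≤ x + Real.exp (x ^ 2) := by
  rcases le_or_gt 1 x with h | h
  · have : Real.exp x ≤ Real.exp (x ^ 2) := Real.exp_le_exp.2 (by nlinarith)
    nlinarith
  rcases le_or_gt x (-1) with h' | h'
  · have h1 : Real.exp x ≤ 1 := Real.exp_le_one_iff.2 (by linarith)
    have h2 : 1 + x ^ 2 ≤ Real.exp (x ^ 2) := by
      have := Real.add_one_le_exp (x ^ 2); linarith
    nlinarith
  · -- |x| ≤ 1
    have hx1 : |x| ≤ 1 := abs_le.2 ⟨h'.le, h.le⟩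
    have hb := Real.exp_bound hx1 (n := 2) (by norm_num)
    have hsum : (∑ i ∈ Finset.range 2, x ^ i / (Nat.factorial i : ℝ)) = 1 + x := by
      simp [Finset.sum_range_succ, Nat.factorial]
    rw [hsum] at hb
    have hb' : Real.exp x ≤ 1 + x + |x| ^ 2 * ((2:ℕ).succ / ((2:ℕ).factorial * 2 : ℝ)) := by
      have := abs_le.1 hb; linarith [this.2]
    have h2 : |x| ^ 2 = x ^ 2 := sq_abs x
    have h3 : ((2:ℕ).succ / ((2:ℕ).factorial * 2 : ℝ)) = 3 / 4 := by norm_num [Nat.factorial]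
    rw [h2, h3] at hb'
    have h4 : 1 + (3/4) * x ^ 2 ≤ Real.exp (x ^ 2) := by
      have := Real.add_one_le_exp (x ^ 2); nlinarith [sq_nonneg x]
    nlinarith

/-- exp convexity pointwise: `exp(θy) ≤ 1 - θ + θ exp y` for `θ ∈ [0,1]`. -/
lemma exp_theta_mul_le (θ y : ℝ) (h0 : 0 ≤ θ) (h1 : θ ≤ 1) :
    Real.exp (θ * y) ≤ 1 - θ + θ * Real.exp y := by
  have := convexOn_exp.2 (Set.mem_univ y) (Set.mem_univ (0:ℝ)) h0
    (by linarith : (0:ℝ) ≤ 1 - θ) (by ring : θ + (1 - θ) = 1)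
  simp only [smul_eq_mul, mul_zero, add_zero, Real.exp_zero, mul_one] at this
  linarith

variable {Ω : Type} [MeasurableSpace Ω]

lemma tail_sq {m : ℝ} (hm : 2 < m) {P : Measure Ω} {η : Ω → ℝ}
    (htail : ∀ x : ℝ, 0 ≤ x → P {ω | x < |η ω|} ≤ ENNReal.ofReal (Real.exp (-(x ^ m)))) :
    ∀ x : ℝ, 0 ≤ x → P {ω | x < |η ω|} ≤ ENNReal.ofReal (Real.exp (1 - x ^ 2)) := by
  intro x hx
  refine (htail x hx).trans (ENNReal.ofReal_le_ofReal (Real.exp_le_exp.2 ?_))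
  rcases le_or_gt x 1 with h | h
  · nlinarith [Real.rpow_nonneg hx m]
  · have h2 : x ^ (2:ℝ) ≤ x ^ m := Real.rpow_le_rpow_of_exponent_le h.le hm.le
    have h3 : x ^ (2:ℝ) = x ^ 2 := by
      rw [show ((2:ℝ)) = ((2:ℕ):ℝ) by norm_num, Real.rpow_natCast]
    rw [h3] at h2
    linarith

lemma lintegral_exp_sq_le {P : Measure Ω} [IsProbabilityMeasure P] {η : Ω → ℝ}
    (hη : Measurable η)
    (htail : ∀ x : ℝ, 0 ≤ x → P {ω | x < |η ω|} ≤ ENNReal.ofReal (Real.exp (1 - x ^ 2))) :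
    ∫⁻ ω, ENNReal.ofReal (Real.exp ((η ω) ^ 2 / 2)) ∂P ≤ ENNReal.ofReal (1 + Real.exp 1) := by
  have hmble : Measurable fun ω => Real.exp ((η ω) ^ 2 / 2) := ((hη.pow_const 2).div_const 2).exp
  rw [lintegral_eq_lintegral_meas_lt P (Filter.Eventually.of_forall fun ω => (Real.exp_pos _).le)
    hmble.aemeasurable]
  have hsplit : Set.Ioi (0:ℝ) = Set.Ioc 0 1 ∪ Set.Ioi 1 :=
    (Set.Ioc_union_Ioi_eq_Ioi zero_le_one).symm
  rw [hsplit, lintegral_union measurableSet_Ioi (Set.Ioc_disjoint_Ioi le_rfl)]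
  have h1 : (∫⁻ t in Set.Ioc (0:ℝ) 1, P {a | t < Real.exp ((η a) ^ 2 / 2)}) ≤ 1 := by
    calc (∫⁻ t in Set.Ioc (0:ℝ) 1, P {a | t < Real.exp ((η a) ^ 2 / 2)})
        ≤ ∫⁻ _ in Set.Ioc (0:ℝ) 1, 1 := lintegral_mono fun t => prob_le_one
      _ = 1 := by simp [Real.volume_Ioc]
  have h2 : (∫⁻ t in Set.Ioi (1:ℝ), P {a | t < Real.exp ((η a) ^ 2 / 2)})
      ≤ ENNReal.ofReal (Real.exp 1) := by
    have hb : ∀ t ∈ Set.Ioi (1:ℝ), P {a | t < Real.exp ((η a) ^ 2 / 2)}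
        ≤ ENNReal.ofReal (Real.exp 1 * t ^ (-2:ℝ)) := by
      intro t ht
      have ht1 : (1:ℝ) < t := ht
      have ht0 : (0:ℝ) < t := lt_trans one_pos ht1
      have hlog : 0 ≤ Real.log t := Real.log_nonneg ht1.le
      have hset : {a | t < Real.exp ((η a) ^ 2 / 2)}
          = {a | Real.sqrt (2 * Real.log t) < |η a|} := by
        ext a
        simp only [Set.mem_setOf_eq]
        rw [← Real.log_lt_iff_lt_exp ht0]
        constructor
        · intro h
          have h' : 2 * Real.log t < (η a) ^ 2 := by linarith
          have := Real.sqrt_lt_sqrt (by linarith) h'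
          rwa [Real.sqrt_sq_eq_abs] at this
        · intro h
          have := Real.sq_sqrt (by linarith : (0:ℝ) ≤ 2 * Real.log t)
          have h2 : Real.sqrt (2 * Real.log t) ^ 2 < |η a| ^ 2 := by
            apply sq_lt_sq' _ h
            have : 0 ≤ Real.sqrt (2 * Real.log t) := Real.sqrt_nonneg _
            nlinarith [abs_nonneg (η a)]
          rw [this, sq_abs] at h2
          linarith
      rw [hset]
      refine (htail _ (Real.sqrt_nonneg _)).trans (le_of_eq ?_)
      congr 1
      rw [Real.sq_sqrt (by linarith : (0:ℝ) ≤ 2 * Real.log t)]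
      rw [Real.rpow_def_of_pos ht0]
      rw [← Real.exp_add]
      ring_nf
    calc (∫⁻ t in Set.Ioi (1:ℝ), P {a | t < Real.exp ((η a) ^ 2 / 2)})
        ≤ ∫⁻ t in Set.Ioi (1:ℝ), ENNReal.ofReal (Real.exp 1 * t ^ (-2:ℝ)) :=
          setLIntegral_mono_ae (by fun_prop)
            (Filter.Eventually.of_forall fun t ht => hb t ht)
      _ = ENNReal.ofReal (∫ t in Set.Ioi (1:ℝ), Real.exp 1 * t ^ (-2:ℝ)) := by
          rw [MeasureTheory.ofReal_integral_eq_lintegral_ofReal]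
          · exact ((integrableOn_Ioi_rpow_of_lt (by norm_num) one_pos).const_mul _)
          · filter_upwards [ae_restrict_mem measurableSet_Ioi] with t ht
            have : (0:ℝ) < t := lt_trans one_pos ht
            positivity
      _ = ENNReal.ofReal (Real.exp 1) := by
          rw [MeasureTheory.integral_const_mul, integral_Ioi_rpow_of_lt (by norm_num) one_pos]
          norm_num
  calc (∫⁻ t in Set.Ioc (0:ℝ) 1, P {a | t < Real.exp ((η a) ^ 2 / 2)})
        + ∫⁻ t in Set.Ioi (1:ℝ), P {a | t < Real.exp ((η a) ^ 2 / 2)}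
      ≤ 1 + ENNReal.ofReal (Real.exp 1) := add_le_add h1 h2
    _ = ENNReal.ofReal (1 + Real.exp 1) := by
        rw [ENNReal.ofReal_add zero_le_one (Real.exp_pos 1).le, ENNReal.ofReal_one]

noncomputable def K0 : ℝ := 1 + Real.exp 1
noncomputable def cSG : ℝ := 1 / 2 + 2 * K0

lemma K0_pos : (0:ℝ) < K0 := by rw [K0]; positivity

lemma cSG_pos : (0:ℝ) < cSG := by rw [cSG]; nlinarith [K0_pos]

lemma abs_le_exp_half_sq (x : ℝ) : |x| ≤ Real.exp (x ^ 2 / 2) := by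
  have h1 : |x| ≤ x ^ 2 / 2 + 1 := by nlinarith [sq_abs x, sq_nonneg (|x| - 1)]
  have h2 := Real.add_one_le_exp (x ^ 2 / 2)
  linarith

variable {P : Measure Ω} [IsProbabilityMeasure P] {η : Ω → ℝ}

lemma integrable_exp_mul (hη : Measurable η)
    (hg : Integrable (fun ω => Real.exp ((η ω) ^ 2 / 2)) P) (t : ℝ) :
    Integrable (fun ω => Real.exp (t * η ω)) P := by
  refine Integrable.mono' (hg.const_mul (Real.exp (t ^ 2 / 2)))
    ((hη.const_mul t).exp.aestronglyMeasurable)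
    (Filter.Eventually.of_forall fun ω => ?_)
  rw [Real.norm_eq_abs, abs_of_pos (Real.exp_pos _), ← Real.exp_add]
  apply Real.exp_le_exp.2
  nlinarith [sq_nonneg (t - η ω), sq_nonneg (t + η ω)]

lemma integrable_eta (hη : Measurable η)
    (hg : Integrable (fun ω => Real.exp ((η ω) ^ 2 / 2)) P) : Integrable η P :=
  Integrable.mono' hg hη.aestronglyMeasurable
    (Filter.Eventually.of_forall fun ω => by
      rw [Real.norm_eq_abs]; exact abs_le_exp_half_sq (η ω))

lemma mgf_le_exp (hη : Measurable η) (hmean : ∫ ω, η ω ∂P = 0)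
    (hg : Integrable (fun ω => Real.exp ((η ω) ^ 2 / 2)) P)
    (hK : ∫ ω, Real.exp ((η ω) ^ 2 / 2) ∂P ≤ K0) (t : ℝ) :
    mgf η P t ≤ Real.exp (cSG * t ^ 2) := by
  set K := ∫ ω, Real.exp ((η ω) ^ 2 / 2) ∂P with hKdef
  have ht2 : (0:ℝ) ≤ 2 * t ^ 2 := by positivity
  rcases le_or_gt (2 * t ^ 2) 1 with hcase | hcase
  · -- small t
    have hpt : ∀ ω, Real.exp (t * η ω)
        ≤ t * η ω + ((1 - 2 * t ^ 2) + 2 * t ^ 2 * Real.exp ((η ω) ^ 2 / 2)) := by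
      intro ω
      have h1 := exp_le_add_exp_sq (t * η ω)
      have h2 : (t * η ω) ^ 2 = 2 * t ^ 2 * ((η ω) ^ 2 / 2) := by ring
      have h3 := exp_theta_mul_le (2 * t ^ 2) ((η ω) ^ 2 / 2) ht2 hcase
      rw [h2] at h1
      linarith
    have hint2 : Integrable
        (fun ω => t * η ω + ((1 - 2 * t ^ 2) + 2 * t ^ 2 * Real.exp ((η ω) ^ 2 / 2))) P :=
      ((integrable_eta hη hg).const_mul t).add ((integrable_const _).add (hg.const_mul _))
    have hval : ∫ ω, (t * η ω + ((1 - 2 * t ^ 2) + 2 * t ^ 2 * Real.exp ((η ω) ^ 2 / 2))) ∂P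
        = 1 + 2 * t ^ 2 * (K - 1) := by
      have hi2 : Integrable (fun ω => 1 - 2 * t ^ 2 + 2 * t ^ 2 * Real.exp ((η ω) ^ 2 / 2)) P :=
        by exact (integrable_const _).add (hg.const_mul _)
      rw [integral_add ((integrable_eta hη hg).const_mul t) hi2,
        integral_add (integrable_const (1 - 2 * t ^ 2)) (hg.const_mul (2 * t ^ 2)),
        MeasureTheory.integral_const_mul, MeasureTheory.integral_const_mul, hmean,
        MeasureTheory.integral_const]
      simp only [measure_univ, probReal_univ, ENNReal.toReal_one, smul_eq_mul, one_mul, ← hKdef]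
      ring
    have hmono := integral_mono (integrable_exp_mul hη hg t) hint2 hpt
    rw [hval] at hmono
    calc mgf η P t ≤ 1 + 2 * t ^ 2 * (K - 1) := hmono
      _ ≤ Real.exp (2 * t ^ 2 * (K - 1)) := by
          have := Real.add_one_le_exp (2 * t ^ 2 * (K - 1)); linarith
      _ ≤ Real.exp (cSG * t ^ 2) := by
          apply Real.exp_le_exp.2
          have hK1 : K - 1 ≤ K0 := by have := K0_pos; linarith
          have : 2 * t ^ 2 * (K - 1) ≤ 2 * t ^ 2 * K0 :=
            mul_le_mul_of_nonneg_left hK1 ht2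
          calc 2 * t ^ 2 * (K - 1) ≤ 2 * t ^ 2 * K0 := this
            _ ≤ cSG * t ^ 2 := by rw [cSG]; nlinarith [sq_nonneg t]
  · -- large t
    have hpt : ∀ ω, Real.exp (t * η ω)
        ≤ Real.exp (t ^ 2 / 2) * Real.exp ((η ω) ^ 2 / 2) := by
      intro ω
      rw [← Real.exp_add]
      apply Real.exp_le_exp.2
      nlinarith [sq_nonneg (t - η ω), sq_nonneg (t + η ω)]
    have hmono := integral_mono (integrable_exp_mul hη hg t) (hg.const_mul _) hpt
    rw [MeasureTheory.integral_const_mul] at hmono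
    calc mgf η P t ≤ Real.exp (t ^ 2 / 2) * K := hmono
      _ ≤ Real.exp (t ^ 2 / 2) * Real.exp (2 * K0 * t ^ 2) := by
          apply mul_le_mul_of_nonneg_left _ (Real.exp_pos _).le
          calc K ≤ K0 := hK
            _ ≤ Real.exp K0 := by have := Real.add_one_le_exp K0; linarith
            _ ≤ Real.exp (2 * K0 * t ^ 2) := by
                apply Real.exp_le_exp.2
                nlinarith [K0_pos]
      _ = Real.exp (t ^ 2 / 2 + 2 * K0 * t ^ 2) := by rw [← Real.exp_add]
      _ ≤ Real.exp (cSG * t ^ 2) := by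
          apply Real.exp_le_exp.2; rw [cSG]; ring_nf; nlinarith [sq_nonneg t]

lemma key_real {p : ℝ} (hp : 2 ≤ p) :
    (p / (Real.sqrt (p / (2 * cSG)) * Real.exp 1)) ^ p * (2 * Real.exp (p / 2))
      ≤ (2 * Real.sqrt cSG * Real.sqrt p) ^ p := by
  have hc := cSG_pos
  have hp0 : (0:ℝ) < p := by linarith
  set A := Real.sqrt (2 * cSG * p) with hA
  have hA0 : (0:ℝ) < A := Real.sqrt_pos.2 (by positivity)
  have hu0 : (0:ℝ) < Real.sqrt (p / (2 * cSG)) := Real.sqrt_pos.2 (by positivity)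
  have h1 : p / Real.sqrt (p / (2 * cSG)) = A := by
    rw [div_eq_iff hu0.ne', hA, ← Real.sqrt_mul (by positivity)]
    rw [show 2 * cSG * p * (p / (2 * cSG)) = p ^ 2 by field_simp]
    exact (Real.sqrt_sq hp0.le).symm
  have h2 : 2 * Real.sqrt cSG * Real.sqrt p = Real.sqrt 2 * A := by
    rw [hA, ← Real.sqrt_mul (by norm_num : (0:ℝ) ≤ 2) (2 * cSG * p),
      show (2:ℝ) * (2 * cSG * p) = 2 * 2 * (cSG * p) by ring,
      Real.sqrt_mul (by norm_num : (0:ℝ) ≤ 2 * 2),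
      show (2:ℝ) * 2 = 2 * 2 from rfl, Real.sqrt_mul_self (by norm_num : (0:ℝ) ≤ 2),
      Real.sqrt_mul hc.le]
    ring
  rw [h2]
  have hbase : p / (Real.sqrt (p / (2 * cSG)) * Real.exp 1) = A / Real.exp 1 := by
    rw [div_mul_eq_div_div, h1]
  rw [hbase]
  have hexp : Real.exp (p / 2) = Real.exp (1 / 2) ^ p := by
    rw [← Real.exp_mul]; ring_nf
  set B := A * (Real.exp (1 / 2) / Real.exp 1) with hB
  have hB0 : (0:ℝ) < B := by positivity
  set r := Real.sqrt 2 * Real.exp 1 / Real.exp (1 / 2) with hr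
  have hr1 : (Real.sqrt 2) ≤ r := by
    rw [hr, mul_div_assoc]
    nth_rewrite 1 [show Real.sqrt 2 = Real.sqrt 2 * 1 by ring]
    apply mul_le_mul_of_nonneg_left _ (Real.sqrt_nonneg 2)
    rw [le_div_iff₀ (Real.exp_pos _), one_mul]
    exact Real.exp_le_exp.2 (by norm_num)
  have hsqrt2 : (1:ℝ) ≤ Real.sqrt 2 := by
    rw [show (1:ℝ) = Real.sqrt 1 by simp]
    exact Real.sqrt_le_sqrt (by norm_num)
  have hr0 : (1:ℝ) ≤ r := le_trans hsqrt2 hr1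
  have hfact : Real.sqrt 2 * A = B * r := by
    rw [hB, hr]; field_simp
  rw [hfact]
  have hLHS : (A / Real.exp 1) ^ p * (2 * Real.exp (p / 2)) = 2 * B ^ p := by
    have hep : (0:ℝ) < Real.exp 1 ^ p := Real.rpow_pos_of_pos (Real.exp_pos 1) p
    rw [hexp, hB, Real.mul_rpow hA0.le (by positivity : (0:ℝ) ≤ Real.exp (1/2) / Real.exp 1),
      Real.div_rpow hA0.le (Real.exp_pos 1).le,
      Real.div_rpow (Real.exp_pos _).le (Real.exp_pos 1).le]
    field_simp
  rw [hLHS, Real.mul_rpow hB0.le (by linarith : (0:ℝ) ≤ r)]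
  have hrp : (2:ℝ) ≤ r ^ p := by
    have e1 : ((Real.sqrt 2) ^ 2 : ℝ) ≤ r ^ 2 := by
      apply pow_le_pow_left₀ (Real.sqrt_nonneg 2) hr1
    rw [Real.sq_sqrt (by norm_num : (0:ℝ) ≤ 2)] at e1
    have e2 : r ^ (2:ℝ) ≤ r ^ p := Real.rpow_le_rpow_of_exponent_le hr0 hp
    have e3 : r ^ (2:ℝ) = r ^ (2:ℕ) := by
      rw [show ((2:ℝ)) = ((2:ℕ):ℝ) by norm_num, Real.rpow_natCast]
    rw [e3] at e2
    linarith
  have hBp : (0:ℝ) ≤ B ^ p := Real.rpow_nonneg hB0.le p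
  nlinarith

/-- for `m > 2` there is a constant `C = C(m) < ∞` such that any centered
`η` with `P(|η| > x) ≤ exp(-x^m)` has uniformly subgaussian normalized sums of
independent copies: `(E|n^{-1/2}∑ηᵢ|^p)^{1/p} ≤ C √p` for all `n ≥ 1`, `p ≥ 2`;
i.e. `CLT(G_m)` coincides with the subgaussian space `G₂`. -/
theorem stmt_15 (m : ℝ) (hm : 2 < m) :
    ∃ C : ℝ,
      ∀ (Ω : Type) [MeasurableSpace Ω] (P : Measure Ω) [IsProbabilityMeasure P]
        (η : Ω → ℝ), Measurable η →
        (∫ ω, η ω ∂P = 0) →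
        (∀ x : ℝ, 0 ≤ x →
          P {ω | x < |η ω|} ≤ ENNReal.ofReal (Real.exp (-(x ^ m)))) →
        ∀ (ηs : ℕ → Ω → ℝ), (∀ i, Measurable (ηs i)) →
        iIndepFun ηs P →
        (∀ i, IdentDistrib (ηs i) η P P) →
        ∀ (n : ℕ), 1 ≤ n → ∀ p : ℝ, 2 ≤ p →
          (∫⁻ ω, ENNReal.ofReal |(∑ i ∈ Finset.range n, ηs i ω) / Real.sqrt n| ^ p ∂P)
              ^ (1 / p)
            ≤ ENNReal.ofReal (C * Real.sqrt p) := by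
  refine ⟨2 * Real.sqrt cSG, ?_⟩
  intro Ω _ P _ η hη hmean htail ηs hmeas hindep hid n hn p hp
  have hc := cSG_pos
  have hp0 : (0:ℝ) < p := by linarith
  -- integrability of exp(η²/2) and the K bound
  have hgmble : Measurable fun ω => Real.exp ((η ω) ^ 2 / 2) :=
    ((hη.pow_const 2).div_const 2).exp
  have hlint := lintegral_exp_sq_le hη (tail_sq hm htail)
  have hg : Integrable (fun ω => Real.exp ((η ω) ^ 2 / 2)) P := by
    refine ⟨hgmble.aestronglyMeasurable, ?_⟩
    rw [hasFiniteIntegral_iff_ofReal (Filter.Eventually.of_forall fun ω => (Real.exp_pos _).le)]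
    exact lt_of_le_of_lt hlint ENNReal.ofReal_lt_top
  have hK : ∫ ω, Real.exp ((η ω) ^ 2 / 2) ∂P ≤ K0 := by
    rw [integral_eq_lintegral_of_nonneg_ae
      (Filter.Eventually.of_forall fun ω => (Real.exp_pos _).le) hgmble.aestronglyMeasurable]
    exact ENNReal.toReal_le_of_le_ofReal K0_pos.le hlint
  have hmgf := mgf_le_exp hη hmean hg hK
  have hintexp := integrable_exp_mul hη hg
  -- transfer to the copies
  have hidc : ∀ (i : ℕ) (t : ℝ), IdentDistrib (fun ω => Real.exp (t * ηs i ω))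
      (fun ω => Real.exp (t * η ω)) P P := fun i t =>
    (hid i).comp (Real.measurable_exp.comp (measurable_const_mul t))
  have hinti : ∀ (i : ℕ) (t : ℝ), Integrable (fun ω => Real.exp (t * ηs i ω)) P :=
    fun i t => ((hidc i t).integrable_iff).2 (hintexp t)
  have hmgfi : ∀ (i : ℕ) (t : ℝ), mgf (ηs i) P t = mgf η P t := fun i t =>
    (hidc i t).integral_eq
  -- mgf of the sum
  have hmgfS : ∀ t : ℝ, mgf (∑ i ∈ Finset.range n, ηs i) P t
      ≤ Real.exp ((n : ℝ) * (cSG * t ^ 2)) := by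
    intro t
    rw [hindep.mgf_sum hmeas (Finset.range n)]
    calc ∏ i ∈ Finset.range n, mgf (ηs i) P t = (mgf η P t) ^ n := by
          rw [Finset.prod_congr rfl fun i _ => hmgfi i t, Finset.prod_const, Finset.card_range]
      _ ≤ (Real.exp (cSG * t ^ 2)) ^ n := pow_le_pow_left₀ mgf_nonneg (hmgf t) n
      _ = Real.exp ((n : ℝ) * (cSG * t ^ 2)) := by rw [← Real.exp_nat_mul]
  have hintS : ∀ t : ℝ, Integrable
      (fun ω => Real.exp (t * (∑ i ∈ Finset.range n, ηs i) ω)) P := fun t =>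
    hindep.integrable_exp_mul_sum hmeas fun i _ => hinti i t
  have hSmeas : Measurable (∑ i ∈ Finset.range n, ηs i) := by
    have : (∑ i ∈ Finset.range n, ηs i) = fun a => ∑ i ∈ Finset.range n, ηs i a := by
      funext a; exact Finset.sum_apply a _ _
    rw [this]
    exact Finset.measurable_sum _ fun i _ => hmeas i
  -- parameters
  have hn1 : (1:ℝ) ≤ (n : ℝ) := by exact_mod_cast hn
  have hn0 : (0:ℝ) < (n : ℝ) := by linarith
  have hsn : (0:ℝ) < Real.sqrt n := Real.sqrt_pos.2 hn0
  set u := Real.sqrt (p / (2 * cSG)) with hu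
  have hu0 : (0:ℝ) < u := Real.sqrt_pos.2 (by positivity)
  set t0 := u / Real.sqrt n with ht0
  set S := ∑ i ∈ Finset.range n, ηs i with hS
  -- mgf value bound at ±t0
  have ht0sq : (n : ℝ) * (cSG * t0 ^ 2) = p / 2 := by
    rw [ht0, div_pow, Real.sq_sqrt (le_of_lt (by positivity : (0:ℝ) < p / (2 * cSG))),
      Real.sq_sqrt hn0.le]
    field_simp
  have hmgfval : ∀ t : ℝ, t ^ 2 = t0 ^ 2 →
      (∫⁻ ω, ENNReal.ofReal (Real.exp (t * S ω)) ∂P) ≤ ENNReal.ofReal (Real.exp (p / 2)) := by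
    intro t htsq
    rw [← MeasureTheory.ofReal_integral_eq_lintegral_ofReal (hintS t)
      (Filter.Eventually.of_forall fun ω => (Real.exp_pos _).le)]
    apply ENNReal.ofReal_le_ofReal
    calc ∫ ω, Real.exp (t * S ω) ∂P = mgf S P t := rfl
      _ ≤ Real.exp ((n : ℝ) * (cSG * t ^ 2)) := hmgfS t
      _ = Real.exp (p / 2) := by rw [htsq, ht0sq]
  -- pointwise bound
  set D := (p / (u * Real.exp 1)) ^ p with hD
  have hD0 : (0:ℝ) < D := Real.rpow_pos_of_pos (by positivity) p
  have hkey : ∀ ω, ENNReal.ofReal |S ω / Real.sqrt n| ^ p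
      ≤ ENNReal.ofReal (D * (Real.exp (t0 * S ω) + Real.exp (-(t0 * S ω)))) := by
    intro ω
    rw [ENNReal.ofReal_rpow_of_nonneg (abs_nonneg _) hp0.le]
    apply ENNReal.ofReal_le_ofReal
    have hb := abs_rpow_le_mgf_bound (S ω / Real.sqrt n) u p hu0 hp0
    have harg : u * (S ω / Real.sqrt n) = t0 * S ω := by
      rw [ht0]; field_simp
    rwa [harg] at hb
  -- integrate
  have hmain : (∫⁻ ω, ENNReal.ofReal |S ω / Real.sqrt n| ^ p ∂P)
      ≤ ENNReal.ofReal ((2 * Real.sqrt cSG * Real.sqrt p) ^ p) := by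
    calc (∫⁻ ω, ENNReal.ofReal |S ω / Real.sqrt n| ^ p ∂P)
        ≤ ∫⁻ ω, ENNReal.ofReal (D * (Real.exp (t0 * S ω) + Real.exp (-(t0 * S ω)))) ∂P :=
          lintegral_mono hkey
      _ = ENNReal.ofReal D * ((∫⁻ ω, ENNReal.ofReal (Real.exp (t0 * S ω)) ∂P)
            + ∫⁻ ω, ENNReal.ofReal (Real.exp (-t0 * S ω)) ∂P) := by
          simp_rw [ENNReal.ofReal_mul hD0.le,
            ENNReal.ofReal_add (Real.exp_pos _).le (Real.exp_pos _).le, neg_mul]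
          rw [lintegral_const_mul' _ _ ENNReal.ofReal_ne_top,
            lintegral_add_left (by fun_prop)]
      _ ≤ ENNReal.ofReal D * (ENNReal.ofReal (Real.exp (p / 2))
            + ENNReal.ofReal (Real.exp (p / 2))) := by
          apply mul_le_mul_right
          exact add_le_add (hmgfval t0 rfl) (hmgfval (-t0) (neg_sq t0))
      _ = ENNReal.ofReal (D * (2 * Real.exp (p / 2))) := by
          rw [← ENNReal.ofReal_add (Real.exp_pos _).le (Real.exp_pos _).le,
            ← ENNReal.ofReal_mul hD0.le]
          congr 1; ring
      _ ≤ ENNReal.ofReal ((2 * Real.sqrt cSG * Real.sqrt p) ^ p) :=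
          ENNReal.ofReal_le_ofReal (by rw [hD, hu]; exact key_real hp)
  -- take p-th roots
  have hSapp : ∀ ω, (∑ i ∈ Finset.range n, ηs i ω) = S ω :=
    fun ω => (Finset.sum_apply ω (Finset.range n) ηs).symm
  simp_rw [hSapp]
  calc (∫⁻ ω, ENNReal.ofReal |S ω / Real.sqrt n| ^ p ∂P) ^ (1 / p)
      ≤ (ENNReal.ofReal ((2 * Real.sqrt cSG * Real.sqrt p) ^ p)) ^ (1 / p) :=
        ENNReal.rpow_le_rpow hmain (by positivity)
    _ = ENNReal.ofReal (2 * Real.sqrt cSG * Real.sqrt p) := by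
        rw [ENNReal.ofReal_rpow_of_nonneg (Real.rpow_nonneg (by positivity) p) (by positivity),
          ← Real.rpow_mul (by positivity), mul_one_div, div_self hp0.ne', Real.rpow_one]
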